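/- Let a, b, c be positive real numbers satisfying the strict triangle inequalities. For x > 0 define y(x) = (x² − a² + √(x⁴ + 2(2b² − a²)x² + a⁴))/(2x), z(x) = (x² − a² + √(x⁴ + 2(2c² − a²)x² + a⁴))/(2x), S(x) = (x + y(x) + z(x))/2, and f(x) = y(x)·z(x)·(x² − a²) − S(x)(S(x) − x)(S(x) − y(x))(S(x) − z(x)). Then there exists x₀ > a such that f(x₀) = 0. -/

import Mathlib

theorem extouch_key (X a b c p q d : ℝ) (hX : 0 < X) (hd : 0 ≤ d) (hd64 : 64*d ≤ X)
    (hb : 0 < b) (hc : 0 < c) (h8b : 8*b ≤ X) (h8c : 8*c ≤ X)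
    (ha2 : a^2 = X*d)
    (hp1 : X - d ≤ p) (hp2 : p ≤ X - d + b)
    (hq1 : X - d ≤ q) (hq2 : q ≤ X - d + c) :
    (X+p+q)*(p+q-X)*(X+q-p)*(X+p-q) < 16*p*q*(X^2-a^2) := by
  have h1 : X + p + q ≤ 13*X/4 := by linarith
  have h2 : p + q - X ≤ 5*X/4 := by linarith
  have h2' : 0 < p + q - X := by linarith
  have h3 : X + q - p ≤ 73*X/64 := by linarith
  have h3' : 0 < X + q - p := by linarith
  have h4 : X + p - q ≤ 73*X/64 := by linarith
  have h4' : 0 < X + p - q := by linarith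
  have hp0 : 63*X/64 ≤ p := by linarith
  have hq0 : 63*X/64 ≤ q := by linarith
  have hx63 : (0:ℝ) ≤ 63*X/64 := by positivity
  have hL : (X+p+q)*(p+q-X)*(X+q-p)*(X+p-q) ≤ (13*X/4)*(5*X/4)*(73*X/64)*(73*X/64) := by
    have ha' := mul_le_mul h1 h2 (le_of_lt h2') (by positivity)
    have hb' := mul_le_mul ha' h3 (le_of_lt h3') (by positivity)
    have hc' := mul_le_mul hb' h4 (le_of_lt h4') (by positivity)
    linarith
  have hR : 16*(63*X/64)*(63*X/64)*((63*X/64)*X) ≤ 16*p*q*(X^2-a^2) := by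
    have hXa : (63*X/64)*X ≤ X^2 - a^2 := by nlinarith
    have hpq : (63*X/64)*(63*X/64) ≤ p*q := mul_le_mul hp0 hq0 hx63 (by linarith)
    have h5 : (63*X/64)*(63*X/64)*((63*X/64)*X) ≤ p*q*(X^2-a^2) :=
      mul_le_mul hpq hXa (by positivity) (by nlinarith)
    linarith
  have hconst : (13*X/4)*(5*X/4)*(73*X/64)*(73*X/64) < 16*(63*X/64)*(63*X/64)*((63*X/64)*X) := by
    nlinarith [pow_pos hX 4]
  linarith

theorem extouch_sqrt_bounds (a b x : ℝ) (hb : 0 ≤ b) (hx : 0 < x) (hax : a ≤ x) (ha : 0 ≤ a) :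
    x - a^2/x ≤ (x ^ 2 - a ^ 2 + Real.sqrt (x ^ 4 + 2 * (2 * b ^ 2 - a ^ 2) * x ^ 2 + a ^ 4)) / (2 * x)
    ∧ (x ^ 2 - a ^ 2 + Real.sqrt (x ^ 4 + 2 * (2 * b ^ 2 - a ^ 2) * x ^ 2 + a ^ 4)) / (2 * x) ≤ x - a^2/x + b := by
  have hu : 0 ≤ x^2 - a^2 := by nlinarith
  have harg : x ^ 4 + 2 * (2 * b ^ 2 - a ^ 2) * x ^ 2 + a ^ 4 = (x^2-a^2)^2 + (2*b*x)^2 := by ring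
  have hlo : x^2 - a^2 ≤ Real.sqrt (x ^ 4 + 2 * (2 * b ^ 2 - a ^ 2) * x ^ 2 + a ^ 4) := by
    rw [harg]
    calc x^2 - a^2 = Real.sqrt ((x^2-a^2)^2) := (Real.sqrt_sq hu).symm
    _ ≤ _ := Real.sqrt_le_sqrt (by nlinarith [sq_nonneg (2*b*x)])
  have hhi : Real.sqrt (x ^ 4 + 2 * (2 * b ^ 2 - a ^ 2) * x ^ 2 + a ^ 4) ≤ x^2 - a^2 + 2*b*x := by
    rw [harg]
    calc Real.sqrt ((x^2-a^2)^2 + (2*b*x)^2) ≤ Real.sqrt ((x^2-a^2+2*b*x)^2) :=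
          Real.sqrt_le_sqrt (by nlinarith [mul_nonneg (mul_nonneg hb hx.le) hu])
    _ = x^2 - a^2 + 2*b*x := Real.sqrt_sq (by positivity)
  have h2 : (x - a^2/x)*(2*x) = 2*(x^2 - a^2) := by field_simp
  constructor
  · rw [le_div_iff₀ (by positivity)]
    linarith
  · rw [div_le_iff₀ (by positivity)]
    nlinarith

/-- The auxiliary function `f` from the proof of the extouch theorem has a root `x₀ > a`. -/
theorem exists_root_of_extouch_function
    (a b c : ℝ) (ha : 0 < a) (hb : 0 < b) (hc : 0 < c)
    (hab : a < b + c) (hbc : b < c + a) (hca : c < a + b) :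
    let y : ℝ → ℝ := fun x =>
      (x ^ 2 - a ^ 2 + Real.sqrt (x ^ 4 + 2 * (2 * b ^ 2 - a ^ 2) * x ^ 2 + a ^ 4)) / (2 * x)
    let z : ℝ → ℝ := fun x =>
      (x ^ 2 - a ^ 2 + Real.sqrt (x ^ 4 + 2 * (2 * c ^ 2 - a ^ 2) * x ^ 2 + a ^ 4)) / (2 * x)
    let S : ℝ → ℝ := fun x => (x + y x + z x) / 2
    let f : ℝ → ℝ := fun x =>
      y x * z x * (x ^ 2 - a ^ 2) - S x * (S x - x) * (S x - y x) * (S x - z x)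
    ∃ x₀ : ℝ, a < x₀ ∧ f x₀ = 0 := by
  intro y z S f
  set M : ℝ := 8*(a+b+c) with hMdef
  have hMpos : 0 < M := by positivity
  have haM : a ≤ M := by linarith
  -- continuity
  have hne : ∀ t ∈ Set.Icc a M, 2*t ≠ 0 := by
    intro t ht
    have := ht.1
    have : 0 < 2*t := by linarith
    exact ne_of_gt this
  have hyc : ContinuousOn y (Set.Icc a M) :=
    ContinuousOn.div (by fun_prop) (by fun_prop) hne
  have hzc : ContinuousOn z (Set.Icc a M) :=
    ContinuousOn.div (by fun_prop) (by fun_prop) hne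
  have hSc : ContinuousOn S (Set.Icc a M) :=
    ((continuousOn_id.add hyc).add hzc).div_const 2
  have hfc : ContinuousOn f (Set.Icc a M) :=
    ((hyc.mul hzc).mul (by fun_prop)).sub
      (((hSc.mul (hSc.sub continuousOn_id)).mul (hSc.sub hyc)).mul (hSc.sub hzc))
  -- f a < 0
  have hya : y a = b := by
    show (a ^ 2 - a ^ 2 + Real.sqrt (a ^ 4 + 2 * (2 * b ^ 2 - a ^ 2) * a ^ 2 + a ^ 4)) / (2 * a) = b
    rw [show a ^ 4 + 2 * (2 * b ^ 2 - a ^ 2) * a ^ 2 + a ^ 4 = (2*a*b)^2 by ring,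
      Real.sqrt_sq (by positivity)]
    field_simp
    ring
  have hza : z a = c := by
    show (a ^ 2 - a ^ 2 + Real.sqrt (a ^ 4 + 2 * (2 * c ^ 2 - a ^ 2) * a ^ 2 + a ^ 4)) / (2 * a) = c
    rw [show a ^ 4 + 2 * (2 * c ^ 2 - a ^ 2) * a ^ 2 + a ^ 4 = (2*a*c)^2 by ring,
      Real.sqrt_sq (by positivity)]
    field_simp
    ring
  have hfa : f a < 0 := by
    show y a * z a * (a ^ 2 - a ^ 2) - S a * (S a - a) * (S a - y a) * (S a - z a) < 0
    have hSa : S a = (a+b+c)/2 := by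
      show (a + y a + z a)/2 = (a+b+c)/2
      rw [hya, hza]
    rw [hya, hza, hSa]
    have hP : 0 < ((a+b+c)/2) * ((a+b+c)/2 - a) * ((a+b+c)/2 - b) * ((a+b+c)/2 - c) := by
      apply mul_pos (mul_pos (mul_pos (by linarith) (by linarith)) (by linarith)) (by linarith)
    have h0 : b * c * (a^2 - a^2) = 0 := by ring
    linarith
  -- f M > 0
  have hyM := extouch_sqrt_bounds a b M hb.le hMpos haM ha.le
  have hzM := extouch_sqrt_bounds a c M hc.le hMpos haM ha.le
  have hp1 : M - a^2/M ≤ y M := hyM.1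
  have hp2 : y M ≤ M - a^2/M + b := hyM.2
  have hq1 : M - a^2/M ≤ z M := hzM.1
  have hq2 : z M ≤ M - a^2/M + c := hzM.2
  have hd : (0:ℝ) ≤ a^2/M := by positivity
  have hd64 : 64*(a^2/M) ≤ M := by
    rw [show 64*(a^2/M) = 64*a^2/M by ring, div_le_iff₀ hMpos]
    nlinarith
  have ha2 : a^2 = M*(a^2/M) := by field_simp
  have hkey := extouch_key M a b c (y M) (z M) (a^2/M) hMpos hd hd64 hb hc
    (by linarith) (by linarith) ha2 hp1 hp2 hq1 hq2
  have hfM : 0 < f M := by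
    show 0 < y M * z M * (M ^ 2 - a ^ 2) - S M * (S M - M) * (S M - y M) * (S M - z M)
    have hSM : S M = (M + y M + z M)/2 := rfl
    rw [hSM]
    have e : (M + y M + z M)/2 * ((M + y M + z M)/2 - M) * ((M + y M + z M)/2 - y M)
        * ((M + y M + z M)/2 - z M)
        = (M + y M + z M)*(y M + z M - M)*(M + z M - y M)*(M + y M - z M)/16 := by ring
    rw [e]
    linarith
  -- IVT
  obtain ⟨x₀, hx₀mem, hfx₀⟩ := intermediate_value_Icc haM hfc ⟨hfa.le, hfM.le⟩
  refine ⟨x₀, ?_, hfx₀⟩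
  rcases eq_or_lt_of_le hx₀mem.1 with h | h
  · exfalso; rw [← h] at hfx₀; linarith
  · exact h
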